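/- The polar dual of the 24-cell is the convex hull of G ∪ R ∪ B: (convexHull ℝ V)° = convexHull ℝ (G ∪ R ∪ B). -/

import Mathlib

open scoped RealInnerProductSpace

/-- The `i`-th standard basis vector of `EuclideanSpace ℝ (Fin 4)`. -/
noncomputable def stdV (i : Fin 4) : EuclideanSpace ℝ (Fin 4) :=
  EuclideanSpace.single i (1 : ℝ)

/-- The 24 vertices of the 24-cell: all permutations of the coordinates of `(±1, ±1, 0, 0)`. -/
def cellV : Set (EuclideanSpace ℝ (Fin 4)) :=
  {x | ∃ i j : Fin 4, i ≠ j ∧ ∃ ε δ : ℝ, (ε = 1 ∨ ε = -1) ∧ (δ = 1 ∨ δ = -1) ∧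
    x = ε • stdV i + δ • stdV j}

/-- The 8 green vectors `±eᵢ`. -/
def colG : Set (EuclideanSpace ℝ (Fin 4)) :=
  {x | ∃ i : Fin 4, x = stdV i ∨ x = -stdV i}

/-- The 8 red vectors `(±1/2, ±1/2, ±1/2, ±1/2)` with an even number of minus signs. -/
def colR : Set (EuclideanSpace ℝ (Fin 4)) :=
  {x | ∃ ε : Fin 4 → ℝ, (∀ i, ε i = 1 ∨ ε i = -1) ∧ (∏ i, ε i) = 1 ∧ ∀ i, x i = ε i / 2}

/-- The 8 blue vectors `(±1/2, ±1/2, ±1/2, ±1/2)` with an odd number of minus signs. -/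
def colB : Set (EuclideanSpace ℝ (Fin 4)) :=
  {x | ∃ ε : Fin 4 → ℝ, (∀ i, ε i = 1 ∨ ε i = -1) ∧ (∏ i, ε i) = -1 ∧ ∀ i, x i = ε i / 2}

/-- The polar of a subset of `EuclideanSpace ℝ (Fin 4)`. -/
def polarSet (S : Set (EuclideanSpace ℝ (Fin 4))) : Set (EuclideanSpace ℝ (Fin 4)) :=
  {y | ∀ x ∈ S, ⟪x, y⟫ ≤ 1}

lemma polarSet_convex (S : Set (EuclideanSpace ℝ (Fin 4))) : Convex ℝ (polarSet S) := by
  intro y hy z hz a b ha hb hab x hx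
  have h1 := hy x hx
  have h2 := hz x hx
  have : ⟪x, a • y + b • z⟫ = a * ⟪x, y⟫ + b * ⟪x, z⟫ := by
    rw [inner_add_right, real_inner_smul_right, real_inner_smul_right]
  rw [this]
  nlinarith [mul_le_mul_of_nonneg_left h1 ha, mul_le_mul_of_nonneg_left h2 hb]

lemma polarSet_convexHull (S : Set (EuclideanSpace ℝ (Fin 4))) :
    polarSet (convexHull ℝ S) = polarSet S := by
  apply Set.Subset.antisymm
  · intro y hy x hx
    exact hy x (subset_convexHull ℝ S hx)
  · intro y hy x hx
    have hconv : Convex ℝ {x : EuclideanSpace ℝ (Fin 4) | ⟪x, y⟫ ≤ 1} := by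
      apply convex_halfSpace_le
      exact ⟨fun u v => inner_add_left u v y, fun c u => real_inner_smul_left u y c⟩
    exact convexHull_min (fun u hu => hy u hu) hconv hx

lemma inner_vertex (i j : Fin 4) (ε δ : ℝ) (y : EuclideanSpace ℝ (Fin 4)) :
    ⟪ε • stdV i + δ • stdV j, y⟫ = ε * y i + δ * y j := by
  simp [stdV, inner_add_left, real_inner_smul_left, EuclideanSpace.inner_single_left]

lemma prod_pm (ε : Fin 4 → ℝ) (h : ∀ i, ε i = 1 ∨ ε i = -1) :
    (∏ i, ε i) = 1 ∨ (∏ i, ε i) = -1 := by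
  rw [Fin.prod_univ_four]
  rcases h 0 with h0 | h0 <;> rcases h 1 with h1 | h1 <;> rcases h 2 with h2 | h2 <;>
    rcases h 3 with h3 | h3 <;> rw [h0, h1, h2, h3] <;> norm_num

lemma half_mem (ε : Fin 4 → ℝ) (h : ∀ i, ε i = 1 ∨ ε i = -1) :
    (WithLp.equiv 2 (Fin 4 → ℝ)).symm (fun k => ε k / 2) ∈ colR ∪ colB := by
  rcases prod_pm ε h with hp | hp
  · exact Or.inl ⟨ε, h, hp, fun i => rfl⟩
  · exact Or.inr ⟨ε, h, hp, fun i => rfl⟩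

/-- The polar dual of the 24-cell is the convex hull of `G ∪ R ∪ B`. -/
theorem cell24_polar :
    polarSet (convexHull ℝ cellV) = convexHull ℝ (colG ∪ colR ∪ colB) := by
  rw [polarSet_convexHull]
  apply Set.Subset.antisymm
  · -- hard direction
    intro y hy
    have key : ∀ i j : Fin 4, i ≠ j → |y i| + |y j| ≤ 1 := by
      intro i j hij
      set ε : ℝ := if 0 ≤ y i then 1 else -1 with hε
      set δ : ℝ := if 0 ≤ y j then 1 else -1 with hδ
      have hmem : ε • stdV i + δ • stdV j ∈ cellV :=
        ⟨i, j, hij, ε, δ, by simp only [hε]; split_ifs <;> simp, by simp only [hδ]; split_ifs <;> simp, rfl⟩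
      have h1 := hy _ hmem
      rw [inner_vertex] at h1
      have hi : ε * y i = |y i| := by
        simp only [hε]; split_ifs with h
        · rw [abs_of_nonneg h, one_mul]
        · rw [abs_of_neg (lt_of_not_ge h)]; ring
      have hj : δ * y j = |y j| := by
        simp only [hδ]; split_ifs with h
        · rw [abs_of_nonneg h, one_mul]
        · rw [abs_of_neg (lt_of_not_ge h)]; ring
      linarith [hi ▸ hj ▸ h1]
    -- sort the coordinates by absolute value
    set σ := Tuple.sort (fun k => |y k|) with hσ
    have hmono := Tuple.monotone_sort (fun k => |y k|)
    set i1 := σ 3 with hi1; set i2 := σ 2 with hi2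
    set i3 := σ 1 with hi3; set i4 := σ 0 with hi4
    have h43 : |y i4| ≤ |y i3| := hmono (by decide : (0 : Fin 4) ≤ 1)
    have h32 : |y i3| ≤ |y i2| := hmono (by decide : (1 : Fin 4) ≤ 2)
    have h21 : |y i2| ≤ |y i1| := hmono (by decide : (2 : Fin 4) ≤ 3)
    have ne12 : i1 ≠ i2 := σ.injective.ne (by decide)
    have ne13 : i1 ≠ i3 := σ.injective.ne (by decide)
    have ne14 : i1 ≠ i4 := σ.injective.ne (by decide)
    have ne23 : i2 ≠ i3 := σ.injective.ne (by decide)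
    have ne24 : i2 ≠ i4 := σ.injective.ne (by decide)
    have ne34 : i3 ≠ i4 := σ.injective.ne (by decide)
    have hsum12 : |y i1| + |y i2| ≤ 1 := key i1 i2 ne12
    set s : Fin 4 → ℝ := fun k => if 0 ≤ y k then 1 else -1 with hsdef
    have hs : ∀ k, s k = 1 ∨ s k = -1 := by
      intro k; simp only [hsdef]; split_ifs <;> simp
    have hsy : ∀ k, s k * |y k| = y k := by
      intro k; simp only [hsdef]; split_ifs with h
      · rw [abs_of_nonneg h, one_mul]
      · rw [abs_of_neg (lt_of_not_ge h)]; ring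
    set s' : Fin 4 → ℝ := fun k => if k = i4 then -(s k) else s k with hs'def
    have hs' : ∀ k, s' k = 1 ∨ s' k = -1 := by
      intro k; simp only [hs'def]
      split_ifs with h
      · rcases hs k with h1 | h1 <;> rw [h1] <;> simp
      · exact hs k
    set a1 := |y i1| with ha1; set a2 := |y i2| with ha2
    set a3 := |y i3| with ha3; set a4 := |y i4| with ha4
    set u : EuclideanSpace ℝ (Fin 4) :=
      (WithLp.equiv 2 (Fin 4 → ℝ)).symm (fun k => s k / 2) with hu
    set w : EuclideanSpace ℝ (Fin 4) :=
      (WithLp.equiv 2 (Fin 4 → ℝ)).symm (fun k => s' k / 2) with hw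
    set g : Fin 5 → EuclideanSpace ℝ (Fin 4) :=
      ![s i1 • stdV i1, (-(s i1)) • stdV i1, s i2 • stdV i2, u, w] with hg
    set c : Fin 5 → ℝ :=
      ![a1 - a3 + (1 - a1 - a2)/2, (1 - a1 - a2)/2, a2 - a3, a3 + a4, a3 - a4] with hc
    have hnn : ∀ m ∈ Finset.univ, 0 ≤ c m := by
      intro m _
      fin_cases m <;> simp [hc] <;> linarith [abs_nonneg (y i4)]
    have hsum1 : ∑ m, c m = 1 := by
      rw [hc, Fin.sum_univ_five]; simp; ring
    have hmemg : ∀ m ∈ Finset.univ, g m ∈ convexHull ℝ (colG ∪ colR ∪ colB) := by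
      intro m _
      apply subset_convexHull
      fin_cases m
      · left; left
        rcases hs i1 with h | h <;> rw [hg] <;> simp [h] <;> exact ⟨i1, by simp⟩
      · left; left
        rcases hs i1 with h | h <;> rw [hg] <;> simp [h] <;> exact ⟨i1, by simp⟩
      · left; left
        rcases hs i2 with h | h <;> rw [hg] <;> simp [h] <;> exact ⟨i2, by simp⟩
      · rw [Set.union_assoc]; right
        rw [hg]; simpa [hu] using half_mem s hs
      · rw [Set.union_assoc]; right
        rw [hg]; simpa [hw] using half_mem s' hs'
    have hmem := (convex_convexHull ℝ (colG ∪ colR ∪ colB)).sum_mem hnn hsum1 hmemg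
    have heq : y = ∑ m, c m • g m := by
      have hsurj := σ.surjective
      apply PiLp.ext
      intro k
      have hcases : k = i4 ∨ k = i3 ∨ k = i2 ∨ k = i1 := by
        obtain ⟨m, rfl⟩ := hsurj k
        fin_cases m
        · exact Or.inl rfl
        · exact Or.inr (Or.inl rfl)
        · exact Or.inr (Or.inr (Or.inl rfl))
        · exact Or.inr (Or.inr (Or.inr rfl))
      have expand : (∑ m, c m • g m) k =
          c 0 * (s i1 * stdV i1 k) + c 1 * (-(s i1) * stdV i1 k) +
          c 2 * (s i2 * stdV i2 k) + c 3 * (s k / 2) + c 4 * (s' k / 2) := by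
        rw [Fin.sum_univ_five]
        simp [hg, hu, hw, mul_assoc]
        all_goals ring
      rw [expand]
      have stdval : ∀ p q : Fin 4, stdV p q = if q = p then 1 else 0 := by
        intro p q; exact EuclideanSpace.single_apply p 1 q
      have hc0 : c 0 = a1 - a3 + (1 - a1 - a2)/2 := rfl
      have hc1 : c 1 = (1 - a1 - a2)/2 := rfl
      have hc2 : c 2 = a2 - a3 := rfl
      have hc3 : c 3 = a3 + a4 := rfl
      have hc4 : c 4 = a3 - a4 := rfl
      rcases hcases with rfl | rfl | rfl | rfl
      · -- k = i4
        rw [stdval, stdval, if_neg (Ne.symm ne14), if_neg (Ne.symm ne24)]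
        have hw4 : s' i4 = -(s i4) := by simp [hs'def]
        rw [hw4, hc0, hc1, hc2, hc3, hc4, ← hsy i4, ← ha4]
        ring
      · -- k = i3
        rw [stdval, stdval, if_neg (Ne.symm ne13), if_neg (Ne.symm ne23)]
        have hw3 : s' i3 = s i3 := by simp [hs'def, ne34]
        rw [hw3, hc0, hc1, hc2, hc3, hc4, ← hsy i3, ← ha3]
        ring
      · -- k = i2
        rw [stdval, stdval, if_neg (fun h => ne12 h.symm), if_pos rfl]
        have hw2 : s' i2 = s i2 := by simp [hs'def, ne24]
        rw [hw2, hc0, hc1, hc2, hc3, hc4, ← hsy i2, ← ha2]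
        ring
      · -- k = i1
        rw [stdval, stdval, if_pos rfl, if_neg fun h => ne12 h]
        have hw1 : s' i1 = s i1 := by simp [hs'def, ne14]
        rw [hw1, hc0, hc1, hc2, hc3, hc4, ← hsy i1, ← ha1]
        ring
    rw [heq]
    exact hmem
  · -- easy direction
    apply convexHull_min _ (polarSet_convex cellV)
    intro y hy x hx
    obtain ⟨i, j, hij, ε, δ, hε, hδ, rfl⟩ := hx
    rw [inner_vertex]
    have habs : |y i| + |y j| ≤ 1 := by
      rcases hy with (⟨k, hk | hk⟩ | ⟨e, he, _, hcoord⟩) | ⟨e, he, _, hcoord⟩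
      · subst hk
        rw [stdV]
        rw [EuclideanSpace.single_apply, EuclideanSpace.single_apply]
        split_ifs with h1 h2 h2
        · exact absurd (h1.trans h2.symm) hij
        all_goals norm_num
      · subst hk
        simp only [PiLp.neg_apply, abs_neg]
        rw [stdV, EuclideanSpace.single_apply, EuclideanSpace.single_apply]
        split_ifs with h1 h2 h2
        · exact absurd (h1.trans h2.symm) hij
        all_goals norm_num
      · rw [hcoord i, hcoord j]
        rcases he i with h | h <;> rcases he j with h' | h' <;> rw [h, h'] <;> norm_num [abs_div]
      · rw [hcoord i, hcoord j]
        rcases he i with h | h <;> rcases he j with h' | h' <;> rw [h, h'] <;> norm_num [abs_div]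
    have h1 : ε * y i ≤ |y i| := by
      rcases hε with h | h <;> rw [h]
      · simpa using le_abs_self (y i)
      · rw [neg_one_mul]; exact neg_le_abs (y i)
    have h2 : δ * y j ≤ |y j| := by
      rcases hδ with h | h <;> rw [h]
      · simpa using le_abs_self (y j)
      · rw [neg_one_mul]; exact neg_le_abs (y j)
    linarith
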